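/- Let r ≥ 1 be an integer and let K_r = {g ∈ GL_n(ℤ_p) : every entry of g − 1 has p-adic absolute value ≤ p^{−r}} be the kernel of the reduction map GL_n(ℤ_p) → GL_n(ℤ/p^r). Then for any function φ : ℚ_p^n \ {0} → ℂ the following three conditions are equivalent: (i) φ(gξ) = φ(ξ) for all g ∈ K_r with det g = 1 and all ξ ∈ ℚ_p^n \ {0}; (ii) φ(ξ') = φ(ξ) for all ξ, ξ' ∈ ℚ_p^n \ {0} satisfying ‖ξ' − ξ‖ ≤ p^{−r}·‖ξ‖; (iii) φ(gξ) = φ(ξ) for all g ∈ K_r and all ξ ∈ ℚ_p^n \ {0}. -/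

import Mathlib

open scoped MatrixGroups

noncomputable section

/-- The action of `g ∈ GL_n(ℤ_p)` on `ℚ_p^n` by matrix multiplication. -/
def glAct (p : ℕ) [Fact p.Prime] (n : ℕ) (g : GL (Fin n) ℤ_[p]) (ξ : Fin n → ℚ_[p]) :
    Fin n → ℚ_[p] :=
  Matrix.mulVec (Matrix.of fun i j => (((g : Matrix (Fin n) (Fin n) ℤ_[p]) i j : ℚ_[p]))) ξ

/-- The congruence subgroup `K_r`: elements `g` of `GL_n(ℤ_p)` such that every entry of
`g − 1` has absolute value at most `p^{−r}`. -/
def Kr (p : ℕ) [Fact p.Prime] (n r : ℕ) : Set (GL (Fin n) ℤ_[p]) :=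
  {g | ∀ i j, ‖((g : Matrix (Fin n) (Fin n) ℤ_[p]) - 1) i j‖ ≤ (p : ℝ) ^ (-(r : ℤ))}

namespace StmtAux

variable {p : ℕ} [Fact p.Prime] {n r : ℕ}

lemma pr_pos : (0:ℝ) < (p:ℝ) ^ (-(r:ℤ)) := by
  have hp : (0:ℝ) < p := by exact_mod_cast (Fact.out : p.Prime).pos
  positivity

lemma pr_le_one : (p:ℝ) ^ (-(r:ℤ)) ≤ 1 := by
  have hp : (1:ℝ) ≤ p := by exact_mod_cast (Fact.out : p.Prime).one_lt.le
  calc (p:ℝ) ^ (-(r:ℤ)) ≤ (p:ℝ) ^ (0:ℤ) := by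
        apply zpow_le_zpow_right₀ hp; omega
    _ = 1 := zpow_zero _

lemma pr_lt_one (hr : 1 ≤ r) : (p:ℝ) ^ (-(r:ℤ)) < 1 := by
  have hp : (1:ℝ) < p := by exact_mod_cast (Fact.out : p.Prime).one_lt
  calc (p:ℝ) ^ (-(r:ℤ)) < (p:ℝ) ^ (0:ℤ) := by
        apply zpow_lt_zpow_right₀ hp; omega
    _ = 1 := zpow_zero _

lemma norm_sub_le_max (x y : ℚ_[p]) : ‖x - y‖ ≤ max ‖x‖ ‖y‖ := by
  simpa [sub_eq_add_neg] using Padic.nonarchimedean x (-y)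

lemma glAct_sub_norm_le (g : GL (Fin n) ℤ_[p]) (hg : g ∈ Kr p n r) (ξ : Fin n → ℚ_[p]) :
    ‖glAct p n g ξ - ξ‖ ≤ (p:ℝ) ^ (-(r:ℤ)) * ‖ξ‖ := by
  have hC : 0 ≤ (p:ℝ) ^ (-(r:ℤ)) * ‖ξ‖ := mul_nonneg pr_pos.le (norm_nonneg _)
  rw [pi_norm_le_iff_of_nonneg hC]
  intro i
  have hrepr : (glAct p n g ξ - ξ) i =
      ∑ j, ((((g : Matrix (Fin n) (Fin n) ℤ_[p]) - 1) i j : ℚ_[p]) * ξ j) := by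
    have hxi : ξ i = ∑ j, (if j = i then ξ j else 0) := by
      rw [Finset.sum_ite_eq' Finset.univ i (fun j => ξ j)]; simp
    simp only [Pi.sub_apply, glAct, Matrix.mulVec, dotProduct, Matrix.of_apply]
    rw [hxi, ← Finset.sum_sub_distrib]
    apply Finset.sum_congr rfl
    intro j _
    have : (((g : Matrix (Fin n) (Fin n) ℤ_[p]) - 1) i j : ℚ_[p]) =
        ((g : Matrix (Fin n) (Fin n) ℤ_[p]) i j : ℚ_[p]) - (if i = j then 1 else 0) := by
      push_cast [Matrix.sub_apply, Matrix.one_apply]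
      split_ifs <;> simp
    rw [this, sub_mul]
    congr 1
    rcases eq_or_ne i j with h | h
    · simp [h]
    · simp [if_neg h, if_neg (Ne.symm h)]
  rw [hrepr]
  apply IsUltrametricDist.norm_sum_le_of_forall_le_of_nonneg hC
  intro j _
  rw [norm_mul]
  have h1 : ‖(((g : Matrix (Fin n) (Fin n) ℤ_[p]) - 1) i j : ℚ_[p])‖ ≤ (p:ℝ) ^ (-(r:ℤ)) := by
    rw [← PadicInt.norm_def]; exact hg i j
  exact mul_le_mul h1 (norm_le_pi_norm ξ j) (norm_nonneg _) pr_pos.le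

lemma glAct_ne_zero (hr : 1 ≤ r) (g : GL (Fin n) ℤ_[p]) (hg : g ∈ Kr p n r)
    (ξ : Fin n → ℚ_[p]) (hξ : ξ ≠ 0) : glAct p n g ξ ≠ 0 := by
  intro h0
  have h1 := glAct_sub_norm_le g hg ξ
  rw [h0, zero_sub, norm_neg] at h1
  have h2 : (p:ℝ) ^ (-(r:ℤ)) * ‖ξ‖ < 1 * ‖ξ‖ := by
    apply mul_lt_mul_of_pos_right (pr_lt_one hr)
    exact norm_pos_iff.mpr hξ
  rw [one_mul] at h2
  exact absurd (h1.trans_lt h2) (lt_irrefl _)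

lemma exists_elem (hn : 2 ≤ n) (hr : 1 ≤ r) (ξ ξ' : Fin n → ℚ_[p]) (hξ : ξ ≠ 0)
    (hd : ‖ξ' - ξ‖ ≤ (p:ℝ) ^ (-(r:ℤ)) * ‖ξ‖) :
    ∃ g ∈ Kr p n r, Matrix.det (g : Matrix (Fin n) (Fin n) ℤ_[p]) = 1 ∧
      glAct p n g ξ = ξ' := by
  have hξpos : 0 < ‖ξ‖ := norm_pos_iff.mpr hξ
  haveI : Nonempty (Fin n) := ⟨⟨0, by omega⟩⟩
  obtain ⟨i₀, -, hi₀⟩ := Finset.exists_mem_eq_sup Finset.univ Finset.univ_nonempty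
    (fun i => ‖ξ i‖₊)
  have hnorm_i₀ : ‖ξ i₀‖ = ‖ξ‖ := by
    rw [Pi.norm_def, hi₀]; rfl
  have hξi₀ : ξ i₀ ≠ 0 := by
    rw [← norm_pos_iff, hnorm_i₀]; exact hξpos
  set u : ℚ_[p] := (ξ i₀)⁻¹ with hu_def
  set η : Fin n → ℚ_[p] := ξ' - ξ with hη_def
  have hηle : ∀ i, ‖η i‖ ≤ (p:ℝ) ^ (-(r:ℤ)) * ‖ξ‖ := fun i =>
    (norm_le_pi_norm η i).trans hd
  have hu : ‖u‖ = ‖ξ‖⁻¹ := by rw [hu_def, norm_inv, hnorm_i₀]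
  obtain ⟨i₁, hi₁⟩ : ∃ i₁ : Fin n, i₁ ≠ i₀ :=
    Fintype.exists_ne_of_one_lt_card (by simp; omega) i₀
  have hmulu : ∀ x : ℚ_[p], ‖x‖ ≤ (p:ℝ) ^ (-(r:ℤ)) * ‖ξ‖ → ‖x * u‖ ≤ (p:ℝ) ^ (-(r:ℤ)) := by
    intro x hx
    rw [norm_mul, hu]
    calc ‖x‖ * ‖ξ‖⁻¹ ≤ ((p:ℝ) ^ (-(r:ℤ)) * ‖ξ‖) * ‖ξ‖⁻¹ := by
          exact mul_le_mul_of_nonneg_right hx (by positivity)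
      _ = (p:ℝ) ^ (-(r:ℤ)) := by
          rw [mul_assoc, mul_inv_cancel₀ (ne_of_gt hξpos), mul_one]
  set c : ℚ_[p] := 1 + η i₀ * u with hc_def
  have hcu : ‖η i₀ * u‖ ≤ (p:ℝ) ^ (-(r:ℤ)) := hmulu _ (hηle i₀)
  have hclt : ‖η i₀ * u‖ < 1 := hcu.trans_lt (pr_lt_one hr)
  have hc1 : ‖c‖ = 1 := by
    have hne : ‖(1:ℚ_[p])‖ ≠ ‖η i₀ * u‖ := by rw [norm_one]; exact ne_of_gt hclt
    rw [hc_def, Padic.add_eq_max_of_ne hne, norm_one]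
    exact max_eq_left hclt.le
  have hc0 : c ≠ 0 := by
    intro h; rw [h, norm_zero] at hc1; exact one_ne_zero hc1.symm
  set t : ℚ_[p] := c⁻¹ - 1 with ht_def
  have ht : ‖t‖ ≤ (p:ℝ) ^ (-(r:ℤ)) := by
    have heq : t = (- (η i₀ * u)) * c⁻¹ := by
      rw [ht_def]; field_simp [hc_def]; rw [hc_def]; ring
    rw [heq, norm_mul, norm_inv, hc1, norm_neg]
    simpa using hcu
  have hct : c * (1 + t) = 1 := by
    rw [ht_def]; field_simp; ring
  set a : Fin n → ℚ_[p] := fun i => (if i = i₁ then η i₁ - t * ξ i₁ else η i) * u with ha_def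
  set b : Fin n → ℚ_[p] := fun i => if i = i₁ then t else 0 with hb_def
  have ha : ∀ i, ‖a i‖ ≤ (p:ℝ) ^ (-(r:ℤ)) := by
    intro i
    apply hmulu
    split_ifs with h
    · refine (norm_sub_le_max _ _).trans (max_le (hηle i₁) ?_)
      rw [norm_mul]
      exact mul_le_mul ht (norm_le_pi_norm ξ i₁) (norm_nonneg _) pr_pos.le
    · exact hηle i
  have hb : ∀ i, ‖b i‖ ≤ (p:ℝ) ^ (-(r:ℤ)) := by
    intro i
    have hbi : b i = if i = i₁ then t else 0 := rfl
    rw [hbi]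
    split_ifs with h
    · exact ht
    · rw [norm_zero]; exact pr_pos.le
  have ha_app : ∀ i, a i = (if i = i₁ then η i₁ - t * ξ i₁ else η i) * u := fun i => rfl
  have hb_app : ∀ i, b i = if i = i₁ then t else 0 := fun i => rfl
  have h01 : i₀ ≠ i₁ := fun h => hi₁ h.symm
  set za : Fin n → ℤ_[p] := fun i => ⟨a i, (ha i).trans pr_le_one⟩ with hza_def
  set zb : Fin n → ℤ_[p] := fun i => ⟨b i, (hb i).trans pr_le_one⟩ with hzb_def
  set AZ : Matrix (Fin n) (Fin n) ℤ_[p] := Matrix.of fun i j =>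
    (if j = i₀ then za i else 0) + (if j = i₁ then zb i else 0) with hAZ_def
  set MZ : Matrix (Fin n) (Fin n) ℤ_[p] := 1 + AZ with hMZ_def
  set Aq : Matrix (Fin n) (Fin n) ℚ_[p] := Matrix.of fun i j =>
    (if j = i₀ then a i else 0) + (if j = i₁ then b i else 0) with hAq_def
  have hmap : ∀ i j, ((MZ i j : ℤ_[p]) : ℚ_[p]) = (1 + Aq) i j := by
    intro i j
    simp only [hMZ_def, hAZ_def, hAq_def, Matrix.add_apply, Matrix.of_apply, Matrix.one_apply]
    push_cast
    congr 1
    · split_ifs <;> simp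
    · congr 1 <;> { split_ifs <;> simp [hza_def, hzb_def] }
  -- determinant over ℚ_p
  have hdetq : (1 + Aq).det = 1 := by
    have hE : 1 + Aq = (Matrix.updateCol 1 i₀ (fun i => (if i = i₀ then 1 else 0) + a i)) *
        Matrix.diagonal (fun j => if j = i₁ then 1 + t else 1) := by
      ext i j
      rw [Matrix.mul_diagonal]
      have hAq_app : Aq i j = (if j = i₀ then a i else 0) + (if j = i₁ then b i else 0) := rfl
      rw [Matrix.add_apply, hAq_app, Matrix.updateCol_apply, Matrix.one_apply]
      by_cases hj0 : j = i₀
      · have hj1 : j ≠ i₁ := by rw [hj0]; exact h01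
        rw [if_pos hj0, if_pos hj0, if_neg hj1, if_neg hj1, add_zero, mul_one]
        show (if i = j then (1:ℚ_[p]) else 0) + a i = (if i = i₀ then 1 else 0) + a i
        rw [hj0]
      · by_cases hj1 : j = i₁
        · rw [if_neg hj0, if_neg hj0, if_pos hj1, if_pos hj1, hb_app, zero_add]
          rcases eq_or_ne i j with hii | hii
          · rw [if_pos hii, if_pos (hii.trans hj1)]; ring
          · rw [if_neg hii, if_neg (fun h => hii (h.trans hj1.symm))]; ring
        · rw [if_neg hj0, if_neg hj0, if_neg hj1, if_neg hj1, add_zero, add_zero, mul_one]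
    rw [hE, Matrix.det_mul, Matrix.det_diagonal]
    have h1 : (Matrix.updateCol (1 : Matrix (Fin n) (Fin n) ℚ_[p]) i₀
        (fun i => (if i = i₀ then 1 else 0) + a i)).det
        = (fun i => (if i = i₀ then 1 else 0) + a i) i₀ := by
      rw [← Matrix.cramer_apply, Matrix.cramer_one]; rfl
    rw [h1]
    have h2 : (∏ j, (if j = i₁ then 1 + t else 1)) = 1 + t := by
      rw [Finset.prod_ite_eq' Finset.univ i₁ (fun _ => 1 + t)]
      simp
    rw [h2]
    show ((if i₀ = i₀ then (1:ℚ_[p]) else 0) + a i₀) * (1 + t) = 1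
    have h3 : (1 : ℚ_[p]) + a i₀ = c := by
      rw [ha_app i₀, if_neg h01, hc_def]
    rw [if_pos rfl, h3]
    exact hct
  have hdetmap : ((MZ.det : ℤ_[p]) : ℚ_[p]) = (1 + Aq).det := by
    have h := RingHom.map_det (PadicInt.Coe.ringHom (p := p)) MZ
    have h2 : (PadicInt.Coe.ringHom (p := p)).mapMatrix MZ = 1 + Aq := by
      ext i j
      rw [RingHom.mapMatrix_apply, Matrix.map_apply]
      exact hmap i j
    rw [h2] at h
    exact h
  have hdetZ : MZ.det = 1 := by
    have h1 : ((MZ.det : ℤ_[p]) : ℚ_[p]) = ((1 : ℤ_[p]) : ℚ_[p]) := by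
      rw [hdetmap, hdetq]; simp
    exact Subtype.coe_injective h1
  have hunit : IsUnit MZ := (Matrix.isUnit_iff_isUnit_det MZ).mpr (by rw [hdetZ]; exact isUnit_one)
  refine ⟨hunit.unit, ?_, ?_, ?_⟩
  · -- membership in Kr
    intro i j
    rw [show ((hunit.unit : GL (Fin n) ℤ_[p]) : Matrix (Fin n) (Fin n) ℤ_[p]) = MZ from
      hunit.unit_spec]
    have hsub : (MZ - 1) i j = AZ i j := by rw [hMZ_def]; simp
    rw [hsub]
    simp only [hAZ_def, Matrix.of_apply]
    by_cases hj0 : j = i₀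
    · subst hj0
      rw [if_pos rfl, if_neg h01, add_zero, PadicInt.norm_def]
      exact ha i
    · rw [if_neg hj0]
      by_cases hj1 : j = i₁
      · subst hj1
        rw [if_pos rfl, zero_add, PadicInt.norm_def]
        exact hb i
      · rw [if_neg hj1, add_zero, norm_zero]; exact pr_pos.le
  · rw [show ((hunit.unit : GL (Fin n) ℤ_[p]) : Matrix (Fin n) (Fin n) ℤ_[p]) = MZ from
      hunit.unit_spec]
    exact hdetZ
  · -- the action sends ξ to ξ'
    have hcoe : (Matrix.of fun i j =>
        (((hunit.unit : GL (Fin n) ℤ_[p]) : Matrix (Fin n) (Fin n) ℤ_[p]) i j : ℚ_[p]))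
        = 1 + Aq := by
      ext i j
      rw [Matrix.of_apply, show ((hunit.unit : GL (Fin n) ℤ_[p]) :
        Matrix (Fin n) (Fin n) ℤ_[p]) = MZ from hunit.unit_spec]
      exact hmap i j
    rw [glAct, hcoe]
    funext i
    rw [Matrix.add_mulVec, Matrix.one_mulVec]
    simp only [Pi.add_apply, Matrix.mulVec, dotProduct, hAq_def, Matrix.of_apply,
      add_mul, ite_mul, zero_mul, Finset.sum_add_distrib, Finset.sum_ite_eq']
    simp only [Finset.mem_univ, if_true]
    have huξ : u * ξ i₀ = 1 := by rw [hu_def]; exact inv_mul_cancel₀ hξi₀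
    have hbval : b i * ξ i₁ = if i = i₁ then t * ξ i₁ else 0 := by
      rw [hb_app i]
      split_ifs <;> simp
    have haval : a i * ξ i₀ = if i = i₁ then η i₁ - t * ξ i₁ else η i := by
      rw [ha_app i]
      split_ifs <;> rw [mul_assoc, huξ, mul_one]
    rw [haval, hbval]
    have hηi : η i = ξ' i - ξ i := by rw [hη_def]; simp
    split_ifs with h
    · subst h
      rw [hηi]; ring
    · rw [hηi]; ring

end StmtAux

theorem stmt_3 (p : ℕ) [Fact p.Prime] (n : ℕ) (hn : 2 ≤ n) (r : ℕ) (hr : 1 ≤ r)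
    (φ : (Fin n → ℚ_[p]) → ℂ) :
    -- (i) ↔ (ii)
    ((∀ g ∈ Kr p n r, Matrix.det (g : Matrix (Fin n) (Fin n) ℤ_[p]) = 1 →
        ∀ ξ : Fin n → ℚ_[p], ξ ≠ 0 → φ (glAct p n g ξ) = φ ξ) ↔
      (∀ ξ ξ' : Fin n → ℚ_[p], ξ ≠ 0 → ξ' ≠ 0 →
        ‖ξ' - ξ‖ ≤ (p : ℝ) ^ (-(r : ℤ)) * ‖ξ‖ → φ ξ' = φ ξ)) ∧
    -- (ii) ↔ (iii)
    ((∀ ξ ξ' : Fin n → ℚ_[p], ξ ≠ 0 → ξ' ≠ 0 →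
        ‖ξ' - ξ‖ ≤ (p : ℝ) ^ (-(r : ℤ)) * ‖ξ‖ → φ ξ' = φ ξ) ↔
      (∀ g ∈ Kr p n r, ∀ ξ : Fin n → ℚ_[p], ξ ≠ 0 → φ (glAct p n g ξ) = φ ξ)) := by
  constructor
  · constructor
    · intro h ξ ξ' hξ hξ' hle
      obtain ⟨g, hgK, hgdet, hgξ⟩ := StmtAux.exists_elem hn hr ξ ξ' hξ hle
      rw [← hgξ]
      exact h g hgK hgdet ξ hξ
    · intro h g hg _ ξ hξ
      exact h ξ (glAct p n g ξ) hξ (StmtAux.glAct_ne_zero hr g hg ξ hξ)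
        (StmtAux.glAct_sub_norm_le g hg ξ)
  · constructor
    · intro h g hg ξ hξ
      exact h ξ (glAct p n g ξ) hξ (StmtAux.glAct_ne_zero hr g hg ξ hξ)
        (StmtAux.glAct_sub_norm_le g hg ξ)
    · intro h ξ ξ' hξ hξ' hle
      obtain ⟨g, hgK, _, hgξ⟩ := StmtAux.exists_elem hn hr ξ ξ' hξ hle
      rw [← hgξ]
      exact h g hgK ξ hξ
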